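/- The quaternions q_a = 3/5 + (4/5)i and q_b = 3/5 + (4/5)j generate a free group of rank 2 in the group of unit quaternions; equivalently, the homomorphism from the free group on {a,b} to the unit quaternions sending a ↦ q_a and b ↦ q_b is injective. -/

import Mathlib

/-- The quaternion `q_a = 3/5 + (4/5)i` as a unit quaternion (a point of the unit
`3`-sphere in `ℍ`, which is a group under quaternion multiplication). -/
noncomputable def qa : Metric.sphere (0 : Quaternion ℝ) 1 :=
  ⟨⟨3/5, 4/5, 0, 0⟩, by
    apply mem_sphere_zero_iff_norm.mpr
    have h2 : ∀ q : Quaternion ℝ, Quaternion.normSq q = 1 → ‖q‖ = 1 := by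
      intro q hq
      have h3 := Quaternion.normSq_eq_norm_mul_self q
      rw [hq] at h3
      nlinarith [norm_nonneg q]
    apply h2
    refine (Quaternion.normSq_def' _).trans ?_
    norm_num⟩

/-- The quaternion `q_b = 3/5 + (4/5)j` as a unit quaternion. -/
noncomputable def qb : Metric.sphere (0 : Quaternion ℝ) 1 :=
  ⟨⟨3/5, 0, 4/5, 0⟩, by
    apply mem_sphere_zero_iff_norm.mpr
    have h2 : ∀ q : Quaternion ℝ, Quaternion.normSq q = 1 → ‖q‖ = 1 := by
      intro q hq
      have h3 := Quaternion.normSq_eq_norm_mul_self q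
      rw [hq] at h3
      nlinarith [norm_nonneg q]
    apply h2
    refine (Quaternion.normSq_def' _).trans ?_
    norm_num⟩

open Quaternion

section QFreeAux

/-- Componentwise integer-cast ring homomorphism on quaternions. -/
def qfreeCast {R : Type*} [CommRing R] : ℍ[ℤ] →+* ℍ[R] where
  toFun q := ⟨(q.re : R), (q.imI : R), (q.imJ : R), (q.imK : R)⟩
  map_one' := by ext <;> simp
  map_mul' a b := by
    ext <;> simp [Quaternion.re_mul, Quaternion.imI_mul, Quaternion.imJ_mul,
      Quaternion.imK_mul]
    all_goals symm
    exacts [Quaternion.re_mul (R := R) _ _, Quaternion.imI_mul (R := R) _ _,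
      Quaternion.imJ_mul (R := R) _ _, Quaternion.imK_mul (R := R) _ _]
  map_zero' := by ext <;> simp
  map_add' a b := by ext <;> simp <;> rfl

instance qfreeDecEq (R : Type*) [CommRing R] [DecidableEq R] (c₁ c₂ : R) :
    DecidableEq ℍ[R, c₁, c₂] := fun _ _ =>
  decidable_of_iff _ (QuaternionAlgebra.ext_iff).symm

instance : DecidableEq ℍ[(ZMod 5)] := qfreeDecEq (ZMod 5) (-1) (-1)

@[simp] lemma qfreeCast_re {R : Type*} [CommRing R] (q : ℍ[ℤ]) :
    (qfreeCast q : ℍ[R]).re = (q.re : R) := rfl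
@[simp] lemma qfreeCast_imI {R : Type*} [CommRing R] (q : ℍ[ℤ]) :
    (qfreeCast q : ℍ[R]).imI = (q.imI : R) := rfl
@[simp] lemma qfreeCast_imJ {R : Type*} [CommRing R] (q : ℍ[ℤ]) :
    (qfreeCast q : ℍ[R]).imJ = (q.imJ : R) := rfl
@[simp] lemma qfreeCast_imK {R : Type*} [CommRing R] (q : ℍ[ℤ]) :
    (qfreeCast q : ℍ[R]).imK = (q.imK : R) := rfl

/-- Integer quaternion letters: `5·q_a = 3+4i`, etc. -/
def qfreeEZ : Bool × Bool → ℍ[ℤ]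
  | (true, true) => ⟨3, 4, 0, 0⟩
  | (true, false) => ⟨3, -4, 0, 0⟩
  | (false, true) => ⟨3, 0, 4, 0⟩
  | (false, false) => ⟨3, 0, -4, 0⟩

/-- The letters reduced mod 5. -/
def qfreeE5 : Bool × Bool → ℍ[(ZMod 5)]
  | (true, true) => ⟨3, 4, 0, 0⟩
  | (true, false) => ⟨3, 1, 0, 0⟩
  | (false, true) => ⟨3, 0, 4, 0⟩
  | (false, false) => ⟨3, 0, 1, 0⟩

lemma qfreeCast_eZ : ∀ l, (qfreeCast (qfreeEZ l) : ℍ[(ZMod 5)]) = qfreeE5 l := by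
  rintro ⟨x, b⟩; cases x <;> cases b <;> ext <;> simp [qfreeEZ, qfreeE5] <;> decide

/-- Rank-one "outer product" elements `π f m` in `ℍ[𝔽₅]` (table). -/
def qfreePi : Bool × Bool → Bool × Bool → ℍ[(ZMod 5)]
  | (true, true), (true, true) => ⟨1, 3, 0, 0⟩
  | (true, true), (true, false) => ⟨0, 0, 1, 3⟩
  | (true, true), (false, true) => ⟨3, 4, 4, 2⟩
  | (true, true), (false, false) => ⟨3, 4, 1, 3⟩
  | (true, false), (true, true) => ⟨0, 0, 4, 3⟩
  | (true, false), (true, false) => ⟨1, 2, 0, 0⟩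
  | (true, false), (false, true) => ⟨4, 3, 2, 4⟩
  | (true, false), (false, false) => ⟨1, 2, 2, 4⟩
  | (false, true), (true, true) => ⟨1, 3, 3, 1⟩
  | (false, true), (true, false) => ⟨2, 4, 1, 3⟩
  | (false, true), (false, true) => ⟨1, 0, 3, 0⟩
  | (false, true), (false, false) => ⟨0, 3, 0, 1⟩
  | (false, false), (true, true) => ⟨1, 3, 2, 4⟩
  | (false, false), (true, false) => ⟨3, 1, 1, 3⟩
  | (false, false), (false, true) => ⟨0, 3, 0, 4⟩
  | (false, false), (false, false) => ⟨1, 0, 2, 0⟩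

/-- Scalars `τ l f` (table). -/
def qfreeTau : Bool × Bool → Bool × Bool → ZMod 5
  | (true, true), (true, true) => 1
  | (true, true), (true, false) => 0
  | (true, true), (false, true) => 1
  | (true, true), (false, false) => 1
  | (true, false), (true, true) => 0
  | (true, false), (true, false) => 1
  | (true, false), (false, true) => 2
  | (true, false), (false, false) => 3
  | (false, true), (true, true) => 3
  | (false, true), (true, false) => 4
  | (false, true), (false, true) => 1
  | (false, true), (false, false) => 0
  | (false, false), (true, true) => 3
  | (false, false), (true, false) => 1
  | (false, false), (false, true) => 0
  | (false, false), (false, false) => 1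

/-- Two successive letters are compatible (not mutually inverse). -/
def qfreeOK (l f : Bool × Bool) : Prop := l.1 ≠ f.1 ∨ l.2 = f.2

instance (l f : Bool × Bool) : Decidable (qfreeOK l f) := by
  unfold qfreeOK; infer_instance

lemma qfree_base : ∀ f, qfreeE5 f = (3 : ZMod 5) • qfreePi f f := by decide

lemma qfree_step : ∀ l f m, qfreeE5 l * qfreePi f m = qfreeTau l f • qfreePi l m := by decide

lemma qfree_tau_ne : ∀ l f, qfreeOK l f → qfreeTau l f ≠ 0 := by decide

lemma qfree_pi_ne : ∀ f m, qfreePi f m ≠ (0 : ℍ[(ZMod 5)]) := by decide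

/-- Main mod-5 lemma: the product over a chain of compatible letters is a nonzero
multiple of some `π`. -/
lemma qfree_prod (L : List (Bool × Bool)) :
    ∀ f, List.Chain' qfreeOK (f :: L) →
      ∃ s : ZMod 5, s ≠ 0 ∧ ∃ m, ((f :: L).map qfreeE5).prod = s • qfreePi f m := by
  induction L with
  | nil =>
    intro f _
    refine ⟨3, by decide, f, ?_⟩
    simp [qfree_base f]
  | cons g t ih =>
    intro f hc
    rw [List.Chain', List.isChain_cons_cons] at hc
    obtain ⟨s, hs, m, hprod⟩ := ih g hc.2
    haveI : Fact (Nat.Prime 5) := ⟨by norm_num⟩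
    refine ⟨s * qfreeTau f g, mul_ne_zero hs (qfree_tau_ne f g hc.1), m, ?_⟩
    have : ((f :: g :: t).map qfreeE5).prod = qfreeE5 f * ((g :: t).map qfreeE5).prod := by
      simp
    rw [this, hprod, mul_smul_comm, qfree_step f g m, smul_smul]

/-- No-cancellation hypothesis implies the chain condition. -/
lemma qfree_chain (L : List (Bool × Bool))
    (h : ∀ (L₁ L₂ : List (Bool × Bool)) (x b : Bool), L ≠ L₁ ++ (x, b) :: (x, !b) :: L₂) :
    List.Chain' qfreeOK L := by
  induction L with
  | nil => exact List.isChain_nil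
  | cons a t ih =>
    cases t with
    | nil => exact List.isChain_singleton _
    | cons g t' =>
      rw [List.Chain', List.isChain_cons_cons]
      constructor
      · by_contra hx
        rw [qfreeOK, not_or, not_ne_iff] at hx
        have hg : g = (a.1, !a.2) := by
          obtain ⟨h1, h2⟩ := hx
          obtain ⟨g1, g2⟩ := g
          simp only [Prod.mk.injEq]
          exact ⟨h1.symm, by revert h2; cases a.2 <;> cases g2 <;> simp⟩
        exact h [] t' a.1 a.2 (by rw [hg]; simp)
      · refine ih fun L₁ L₂ x b hne => ?_
        exact h (a :: L₁) L₂ x b (by rw [hne]; simp)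

end QFreeAux

section QFreeReal

/-- The sphere letters as a function of `Bool × Bool`. -/
noncomputable def qfreeS (l : Bool × Bool) : Metric.sphere (0 : Quaternion ℝ) 1 :=
  cond l.2 (if l.1 then qa else qb) (if l.1 then qa else qb)⁻¹

lemma qfree_coe_letter :
    ∀ l, ((qfreeS l : Metric.sphere (0 : Quaternion ℝ) 1) : ℍ[ℝ]) =
      (5 : ℝ)⁻¹ • (qfreeCast (qfreeEZ l) : ℍ[ℝ]) := by
  have hainv : ((qa : ℍ[ℝ]))⁻¹ = ⟨3/5, -4/5, 0, 0⟩ := by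
    apply inv_eq_of_mul_eq_one_right
    ext
    · exact (Quaternion.re_mul _ _).trans (by norm_num [qa])
    · exact (Quaternion.imI_mul _ _).trans (by norm_num [qa])
    · exact (Quaternion.imJ_mul _ _).trans (by norm_num [qa])
    · exact (Quaternion.imK_mul _ _).trans (by norm_num [qa])
  have hbinv : ((qb : ℍ[ℝ]))⁻¹ = ⟨3/5, 0, -4/5, 0⟩ := by
    apply inv_eq_of_mul_eq_one_right
    ext
    · exact (Quaternion.re_mul _ _).trans (by norm_num [qb])
    · exact (Quaternion.imI_mul _ _).trans (by norm_num [qb])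
    · exact (Quaternion.imJ_mul _ _).trans (by norm_num [qb])
    · exact (Quaternion.imK_mul _ _).trans (by norm_num [qb])
  rintro ⟨x, b⟩
  cases x <;> cases b
  · show ((qb⁻¹ : Metric.sphere (0 : Quaternion ℝ) 1) : ℍ[ℝ]) = _
    rw [Metric.unitSphere.coe_inv, hbinv]
    apply Quaternion.ext <;> simp only [Quaternion.re_smul, Quaternion.imI_smul, Quaternion.imJ_smul, Quaternion.imK_smul, qfreeCast_re,
      qfreeCast_imI, qfreeCast_imJ, qfreeCast_imK] <;>
      simp [qfreeEZ] <;> try norm_num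
  · show ((qb : Metric.sphere (0 : Quaternion ℝ) 1) : ℍ[ℝ]) = _
    apply Quaternion.ext <;> simp only [Quaternion.re_smul, Quaternion.imI_smul, Quaternion.imJ_smul, Quaternion.imK_smul, qfreeCast_re,
      qfreeCast_imI, qfreeCast_imJ, qfreeCast_imK] <;>
      simp [qb, qfreeEZ] <;> try norm_num
  · show ((qa⁻¹ : Metric.sphere (0 : Quaternion ℝ) 1) : ℍ[ℝ]) = _
    rw [Metric.unitSphere.coe_inv, hainv]
    apply Quaternion.ext <;> simp only [Quaternion.re_smul, Quaternion.imI_smul, Quaternion.imJ_smul, Quaternion.imK_smul, qfreeCast_re,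
      qfreeCast_imI, qfreeCast_imJ, qfreeCast_imK] <;>
      simp [qfreeEZ] <;> try norm_num
  · show ((qa : Metric.sphere (0 : Quaternion ℝ) 1) : ℍ[ℝ]) = _
    apply Quaternion.ext <;> simp only [Quaternion.re_smul, Quaternion.imI_smul, Quaternion.imJ_smul, Quaternion.imK_smul, qfreeCast_re,
      qfreeCast_imI, qfreeCast_imJ, qfreeCast_imK] <;>
      simp [qa, qfreeEZ] <;> try norm_num

/-- Coercion from the unit sphere as a monoid hom. -/
noncomputable def qfreeVal : Metric.sphere (0 : Quaternion ℝ) 1 →* ℍ[ℝ] where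
  toFun := Subtype.val
  map_one' := Metric.unitSphere.coe_one
  map_mul' := Metric.unitSphere.coe_mul

lemma qfree_prod_real (L : List (Bool × Bool)) :
    ((L.map qfreeS).prod : ℍ[ℝ]) =
      ((5 : ℝ)⁻¹) ^ L.length • (qfreeCast ((L.map qfreeEZ).prod) : ℍ[ℝ]) := by
  induction L with
  | nil => simp
  | cons a t ih =>
    have h1 : ((a :: t).map qfreeS).prod = qfreeS a * (t.map qfreeS).prod := by simp
    rw [h1, Metric.unitSphere.coe_mul, ih, qfree_coe_letter a]
    rw [smul_mul_smul_comm]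
    simp only [List.map_cons, List.prod_cons, List.length_cons, map_mul]
    rw [pow_succ, mul_comm ((5:ℝ)⁻¹ ^ t.length) _]

end QFreeReal

/-- The quaternions `q_a = 3/5 + (4/5)i` and `q_b = 3/5 + (4/5)j` generate a free group of
rank 2 in the group of unit quaternions: the homomorphism from the free group on `{a,b}`
(modelled as `FreeGroup Bool`) to the unit quaternions sending `a ↦ q_a`, `b ↦ q_b`
is injective. -/
theorem quaternions_generate_free_group :
    Function.Injective
      ((FreeGroup.lift fun x : Bool => if x then qa else qb) :
        FreeGroup Bool →* Metric.sphere (0 : Quaternion ℝ) 1) := by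
  rw [injective_iff_map_eq_one]
  intro w hw
  by_contra hw1
  -- the reduced word of w
  set L : List (Bool × Bool) := w.toWord with hL
  have hLne : L ≠ [] := fun h => hw1 (FreeGroup.toWord_eq_nil_iff.mp h)
  -- the value of the lift as a quaternion product
  have hlift : (FreeGroup.lift fun x : Bool => if x then qa else qb) w
      = (L.map qfreeS).prod := by
    conv_lhs => rw [← FreeGroup.mk_toWord (x := w)]
    rw [FreeGroup.lift_mk, ← hL]
    rfl
  -- coe to quaternions and clear denominators
  have hcoe : ((5 : ℝ)⁻¹) ^ L.length • (qfreeCast ((L.map qfreeEZ).prod) : ℍ[ℝ]) = 1 := by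
    rw [← qfree_prod_real, ← hlift, hw, Metric.unitSphere.coe_one]
  have hcast : (qfreeCast ((L.map qfreeEZ).prod) : ℍ[ℝ]) = ((5 : ℝ) ^ L.length) • 1 := by
    have := congrArg (fun z => ((5 : ℝ) ^ L.length) • z) hcoe
    simpa [smul_smul, ← mul_pow] using this
  -- integer components
  set P : ℍ[ℤ] := (L.map qfreeEZ).prod with hP
  have hre : (P.re : ℝ) = 5 ^ L.length := by
    have := congrArg QuaternionAlgebra.re hcast
    simpa using this
  have himI : (P.imI : ℝ) = 0 := by
    have := congrArg QuaternionAlgebra.imI hcast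
    simpa using this
  have himJ : (P.imJ : ℝ) = 0 := by
    have := congrArg QuaternionAlgebra.imJ hcast
    simpa using this
  have himK : (P.imK : ℝ) = 0 := by
    have := congrArg QuaternionAlgebra.imK hcast
    simpa using this
  have hPval : P = ⟨5 ^ L.length, 0, 0, 0⟩ := by
    ext
    · exact_mod_cast hre
    · exact_mod_cast himI
    · exact_mod_cast himJ
    · exact_mod_cast himK
  -- reduce mod 5 : the product is zero
  have hP5 : ((L.map qfreeE5).prod : ℍ[(ZMod 5)]) = 0 := by
    have h1 : (qfreeCast P : ℍ[(ZMod 5)]) = (L.map qfreeE5).prod := by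
      rw [hP, map_list_prod, List.map_map]
      congr 1
      exact List.map_congr_left fun l _ => qfreeCast_eZ l
    rw [← h1]
    have hn : L.length ≠ 0 := by simpa using hLne
    apply Quaternion.ext <;> simp only [qfreeCast_re, qfreeCast_imI, qfreeCast_imJ, qfreeCast_imK] <;>
      rw [hPval] <;> simp
    simp [show ((5 : ZMod 5)) = 0 from rfl, zero_pow hn]
  -- but the mod-5 product of a reduced word is nonzero
  have hreduce : FreeGroup.reduce L = L := by
    rw [hL]; exact FreeGroup.reduce_toWord w
  have hred : List.Chain' qfreeOK L := by
    apply qfree_chain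
    intro L₁ L₂ x b hdecomp
    exact FreeGroup.reduce.not (hreduce.trans hdecomp)
  obtain ⟨f, rest, hfr⟩ := List.exists_cons_of_ne_nil hLne
  obtain ⟨s, hs, m, hpm⟩ := qfree_prod rest f (hfr ▸ hred)
  haveI : Fact (Nat.Prime 5) := ⟨by norm_num⟩
  have hne : ((L.map qfreeE5).prod : ℍ[(ZMod 5)]) ≠ 0 := by
    rw [hfr, hpm]
    exact smul_ne_zero hs (qfree_pi_ne f m)
  exact hne hP5
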